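/- Fix κ > 0 and N ∈ ℕ, and let φ_N(x) = κ + Σ_{k=1}^N a_k √2 cos(2πkx) with a_k = √2κ/(1+Dμ_k), μ_k = 4π²k². Then J(φ_N) ≤ −κ²/2 − κ²(√2−1)·N/(1+Dμ_N) + κ log(4N), where J(u) = (D/2)∫₀¹|u_x|² + (1/2)∫₀¹u² − κ log(∫₀¹e^u). -/

import Mathlib

open Real MeasureTheory Filter

/-- The energy functional `J(u) = (D/2)∫|u_x|² + (1/2)∫u² − κ log(∫ e^u)`. -/
noncomputable def J (D κ : ℝ) (u : ℝ → ℝ) : ℝ :=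
  (D / 2) * (∫ x in (0:ℝ)..1, (deriv u x) ^ 2)
    + (1 / 2) * (∫ x in (0:ℝ)..1, (u x) ^ 2)
    - κ * Real.log (∫ x in (0:ℝ)..1, Real.exp (u x))

open intervalIntegral


lemma int_cos (c : ℝ) (hc : c ≠ 0) : ∫ x in (0:ℝ)..1, Real.cos (c * x) = Real.sin c / c := by
  rw [intervalIntegral.integral_comp_mul_left _ hc]
  simp [integral_cos]
  ring

lemma int_cos_int (n : ℤ) (hn : n ≠ 0) : ∫ x in (0:ℝ)..1, Real.cos (2 * π * n * x) = 0 := by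
  have h : (2 * π * (n:ℝ)) ≠ 0 := by
    have := Real.pi_ne_zero
    have : (n:ℝ) ≠ 0 := Int.cast_ne_zero.mpr hn
    positivity
  rw [int_cos _ h]
  have : Real.sin (2 * π * n) = 0 := by
    have := Real.sin_int_mul_pi (2*n)
    rw [show ((2*n : ℤ) : ℝ) * π = 2 * π * n by push_cast; ring] at this
    exact this
  simp [this]

lemma cc_ptwise (A B : ℝ) : Real.cos A * Real.cos B = (Real.cos (A - B) + Real.cos (A + B)) / 2 := by
  rw [Real.cos_add, Real.cos_sub]; ring

lemma ss_ptwise (A B : ℝ) : Real.sin A * Real.sin B = (Real.cos (A - B) - Real.cos (A + B)) / 2 := by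
  rw [Real.cos_add, Real.cos_sub]; ring

lemma ii_cos (c : ℝ) : IntervalIntegrable (fun x => Real.cos (c * x)) volume 0 1 :=
  (Real.continuous_cos.comp (continuous_const.mul continuous_id)).intervalIntegrable 0 1

lemma int_cc (j k : ℕ) (hj : 1 ≤ j) (hk : 1 ≤ k) :
    ∫ x in (0:ℝ)..1, Real.cos (2 * π * j * x) * Real.cos (2 * π * k * x)
      = if j = k then 1/2 else 0 := by
  have key : ∀ x : ℝ, Real.cos (2 * π * j * x) * Real.cos (2 * π * k * x)
      = (Real.cos (2 * π * ((j:ℝ) - k) * x) + Real.cos (2 * π * ((j:ℝ) + k) * x)) / 2 := by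
    intro x
    rw [cc_ptwise]
    ring_nf
  rw [intervalIntegral.integral_congr (fun x _ => key x)]
  have h2 : (∫ x in (0:ℝ)..1, (Real.cos (2 * π * ((j:ℝ) - k) * x) + Real.cos (2 * π * ((j:ℝ) + k) * x)) / 2)
      = ((∫ x in (0:ℝ)..1, Real.cos (2 * π * ((j:ℝ) - k) * x)) + ∫ x in (0:ℝ)..1, Real.cos (2 * π * ((j:ℝ) + k) * x)) / 2 := by
    rw [intervalIntegral.integral_div, intervalIntegral.integral_add]
    · exact (ii_cos (2 * π * ((j:ℝ) - k)))
    · exact (ii_cos (2 * π * ((j:ℝ) + k)))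
  rw [h2]
  have hs : (∫ x in (0:ℝ)..1, Real.cos (2 * π * ((j:ℝ) + k) * x)) = 0 := by
    have hne : ((j:ℤ) + k) ≠ 0 := by omega
    have h := int_cos_int ((j:ℤ) + k) hne
    push_cast at h
    exact h
  rw [hs]
  by_cases hjk : j = k
  · subst hjk
    simp
  · have hd : (∫ x in (0:ℝ)..1, Real.cos (2 * π * ((j:ℝ) - k) * x)) = 0 := by
      have hne : ((j:ℤ) - k) ≠ 0 := by omega
      have h := int_cos_int ((j:ℤ) - k) hne
      push_cast at h
      exact h
    rw [hd]
    simp [hjk]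

lemma int_ss (j k : ℕ) (hj : 1 ≤ j) (hk : 1 ≤ k) :
    ∫ x in (0:ℝ)..1, Real.sin (2 * π * j * x) * Real.sin (2 * π * k * x)
      = if j = k then 1/2 else 0 := by
  have key : ∀ x : ℝ, Real.sin (2 * π * j * x) * Real.sin (2 * π * k * x)
      = (Real.cos (2 * π * ((j:ℝ) - k) * x) - Real.cos (2 * π * ((j:ℝ) + k) * x)) / 2 := by
    intro x
    rw [ss_ptwise]
    ring_nf
  rw [intervalIntegral.integral_congr (fun x _ => key x)]
  have h2 : (∫ x in (0:ℝ)..1, (Real.cos (2 * π * ((j:ℝ) - k) * x) - Real.cos (2 * π * ((j:ℝ) + k) * x)) / 2)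
      = ((∫ x in (0:ℝ)..1, Real.cos (2 * π * ((j:ℝ) - k) * x)) - ∫ x in (0:ℝ)..1, Real.cos (2 * π * ((j:ℝ) + k) * x)) / 2 := by
    rw [intervalIntegral.integral_div, intervalIntegral.integral_sub]
    · exact (ii_cos (2 * π * ((j:ℝ) - k)))
    · exact (ii_cos (2 * π * ((j:ℝ) + k)))
  rw [h2]
  have hs : (∫ x in (0:ℝ)..1, Real.cos (2 * π * ((j:ℝ) + k) * x)) = 0 := by
    have hne : ((j:ℤ) + k) ≠ 0 := by omega
    have h := int_cos_int ((j:ℤ) + k) hne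
    push_cast at h
    exact h
  rw [hs]
  by_cases hjk : j = k
  · subst hjk
    simp
  · have hd : (∫ x in (0:ℝ)..1, Real.cos (2 * π * ((j:ℝ) - k) * x)) = 0 := by
      have hne : ((j:ℤ) - k) ≠ 0 := by omega
      have h := int_cos_int ((j:ℤ) - k) hne
      push_cast at h
      exact h
    rw [hd]
    simp [hjk]

lemma int_sum_cos (N : ℕ) (b : ℕ → ℝ) :
    ∫ x in (0:ℝ)..1, (∑ k ∈ Finset.Icc 1 N, b k * Real.cos (2 * π * k * x)) = 0 := by
  rw [intervalIntegral.integral_finset_sum]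
  · apply Finset.sum_eq_zero
    intro k hk
    have hk1 : 1 ≤ k := (Finset.mem_Icc.mp hk).1
    rw [intervalIntegral.integral_const_mul]
    have : (∫ x in (0:ℝ)..1, Real.cos (2 * π * (k:ℝ) * x)) = 0 := by
      have hne : ((k:ℤ)) ≠ 0 := by omega
      have h := int_cos_int k hne
      push_cast at h
      exact h
    rw [this, mul_zero]
  · intro k _
    exact (Continuous.intervalIntegrable (by fun_prop) 0 1)

lemma int_sum_sq_cos (N : ℕ) (b : ℕ → ℝ) :
    ∫ x in (0:ℝ)..1, (∑ k ∈ Finset.Icc 1 N, b k * Real.cos (2 * π * k * x)) ^ 2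
      = ∑ k ∈ Finset.Icc 1 N, (b k) ^ 2 / 2 := by
  have key : ∀ x : ℝ, (∑ k ∈ Finset.Icc 1 N, b k * Real.cos (2 * π * k * x)) ^ 2
      = ∑ j ∈ Finset.Icc 1 N, ∑ k ∈ Finset.Icc 1 N,
          (b j * b k) * (Real.cos (2 * π * j * x) * Real.cos (2 * π * k * x)) := by
    intro x
    rw [sq, Finset.sum_mul_sum]
    exact Finset.sum_congr rfl fun j _ => Finset.sum_congr rfl fun k _ => by ring
  rw [intervalIntegral.integral_congr (fun x _ => key x)]
  rw [intervalIntegral.integral_finset_sum (fun j _ =>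
    Continuous.intervalIntegrable (by fun_prop) 0 1)]
  have : ∀ j ∈ Finset.Icc 1 N,
      (∫ x in (0:ℝ)..1, ∑ k ∈ Finset.Icc 1 N,
        (b j * b k) * (Real.cos (2 * π * j * x) * Real.cos (2 * π * k * x)))
      = ∑ k ∈ Finset.Icc 1 N, if j = k then b j * b k / 2 else 0 := by
    intro j hj
    rw [intervalIntegral.integral_finset_sum (fun k _ =>
      Continuous.intervalIntegrable (by fun_prop) 0 1)]
    apply Finset.sum_congr rfl
    intro k hk
    rw [intervalIntegral.integral_const_mul,
      int_cc j k (Finset.mem_Icc.mp hj).1 (Finset.mem_Icc.mp hk).1]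
    by_cases h : j = k <;> simp [h] <;> ring
  rw [Finset.sum_congr rfl this]
  apply Finset.sum_congr rfl
  intro j hj
  rw [Finset.sum_ite_eq (Finset.Icc 1 N) j (fun k => b j * b k / 2)]
  simp [hj, sq]

lemma int_sum_sq_sin (N : ℕ) (b : ℕ → ℝ) :
    ∫ x in (0:ℝ)..1, (∑ k ∈ Finset.Icc 1 N, b k * Real.sin (2 * π * k * x)) ^ 2
      = ∑ k ∈ Finset.Icc 1 N, (b k) ^ 2 / 2 := by
  have key : ∀ x : ℝ, (∑ k ∈ Finset.Icc 1 N, b k * Real.sin (2 * π * k * x)) ^ 2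
      = ∑ j ∈ Finset.Icc 1 N, ∑ k ∈ Finset.Icc 1 N,
          (b j * b k) * (Real.sin (2 * π * j * x) * Real.sin (2 * π * k * x)) := by
    intro x
    rw [sq, Finset.sum_mul_sum]
    exact Finset.sum_congr rfl fun j _ => Finset.sum_congr rfl fun k _ => by ring
  rw [intervalIntegral.integral_congr (fun x _ => key x)]
  rw [intervalIntegral.integral_finset_sum (fun j _ =>
    Continuous.intervalIntegrable (by fun_prop) 0 1)]
  have : ∀ j ∈ Finset.Icc 1 N,
      (∫ x in (0:ℝ)..1, ∑ k ∈ Finset.Icc 1 N,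
        (b j * b k) * (Real.sin (2 * π * j * x) * Real.sin (2 * π * k * x)))
      = ∑ k ∈ Finset.Icc 1 N, if j = k then b j * b k / 2 else 0 := by
    intro j hj
    rw [intervalIntegral.integral_finset_sum (fun k _ =>
      Continuous.intervalIntegrable (by fun_prop) 0 1)]
    apply Finset.sum_congr rfl
    intro k hk
    rw [intervalIntegral.integral_const_mul,
      int_ss j k (Finset.mem_Icc.mp hj).1 (Finset.mem_Icc.mp hk).1]
    by_cases h : j = k <;> simp [h] <;> ring
  rw [Finset.sum_congr rfl this]
  apply Finset.sum_congr rfl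
  intro j hj
  rw [Finset.sum_ite_eq (Finset.Icc 1 N) j (fun k => b j * b k / 2)]
  simp [hj, sq]

noncomputable def cc (D κ : ℝ) (k : ℕ) : ℝ := Real.sqrt 2 * κ / (1 + D * (4 * π ^ 2 * (k:ℝ) ^ 2))

noncomputable def ph (D κ : ℝ) (N : ℕ) (x : ℝ) : ℝ :=
  κ + ∑ k ∈ Finset.Icc 1 N, cc D κ k * (Real.sqrt 2 * Real.cos (2 * π * (k:ℝ) * x))

lemma ph_deriv (D κ : ℝ) (N : ℕ) (x : ℝ) :
    deriv (ph D κ N) x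
      = -(∑ k ∈ Finset.Icc 1 N,
          (cc D κ k * Real.sqrt 2 * (2 * π * k)) * Real.sin (2 * π * (k:ℝ) * x)) := by
  have h : HasDerivAt (ph D κ N)
      (∑ k ∈ Finset.Icc 1 N,
        cc D κ k * (Real.sqrt 2 * (-Real.sin (2 * π * (k:ℝ) * x) * (2 * π * (k:ℝ) * 1)))) x := by
    apply HasDerivAt.const_add
    apply HasDerivAt.fun_sum
    intro k _
    exact (((hasDerivAt_id x).const_mul (2 * π * (k:ℝ))).cos.const_mul (Real.sqrt 2)).const_mul
      (cc D κ k)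
  rw [h.deriv, ← Finset.sum_neg_distrib]
  exact Finset.sum_congr rfl fun k _ => by ring

lemma mu_pos (D : ℝ) (hD : 0 < D) (k : ℕ) : 0 < 1 + D * (4 * π ^ 2 * (k:ℝ) ^ 2) := by
  have : 0 ≤ D * (4 * π ^ 2 * (k:ℝ) ^ 2) := by positivity
  linarith

lemma int_deriv_sq (D κ : ℝ) (N : ℕ) :
    ∫ x in (0:ℝ)..1, (deriv (ph D κ N) x) ^ 2
      = ∑ k ∈ Finset.Icc 1 N, (cc D κ k) ^ 2 * (4 * π ^ 2 * (k:ℝ) ^ 2) := by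
  have h1 : ∀ x : ℝ, (deriv (ph D κ N) x) ^ 2
      = (∑ k ∈ Finset.Icc 1 N,
          (cc D κ k * Real.sqrt 2 * (2 * π * k)) * Real.sin (2 * π * (k:ℝ) * x)) ^ 2 := by
    intro x; rw [ph_deriv, neg_sq]
  rw [intervalIntegral.integral_congr (fun x _ => h1 x),
    int_sum_sq_sin N (fun k => cc D κ k * Real.sqrt 2 * (2 * π * k))]
  apply Finset.sum_congr rfl
  intro k _
  have h2 : (Real.sqrt 2) ^ 2 = 2 := Real.sq_sqrt (by norm_num)
  rw [mul_pow, mul_pow, h2]; ring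

lemma int_ph_sq (D κ : ℝ) (N : ℕ) :
    ∫ x in (0:ℝ)..1, (ph D κ N x) ^ 2 = κ ^ 2 + ∑ k ∈ Finset.Icc 1 N, (cc D κ k) ^ 2 := by
  have h1 : ∀ x : ℝ, (ph D κ N x) ^ 2
      = κ ^ 2 + (2 * κ) * (∑ k ∈ Finset.Icc 1 N, (cc D κ k * Real.sqrt 2) * Real.cos (2 * π * (k:ℝ) * x))
        + (∑ k ∈ Finset.Icc 1 N, (cc D κ k * Real.sqrt 2) * Real.cos (2 * π * (k:ℝ) * x)) ^ 2 := by
    intro x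
    have : ph D κ N x = κ + ∑ k ∈ Finset.Icc 1 N, (cc D κ k * Real.sqrt 2) * Real.cos (2 * π * (k:ℝ) * x) := by
      unfold ph
      congr 1
      exact Finset.sum_congr rfl fun k _ => by ring
    rw [this]; ring
  rw [intervalIntegral.integral_congr (fun x _ => h1 x)]
  rw [intervalIntegral.integral_add (by exact Continuous.intervalIntegrable (by fun_prop) 0 1)
      (Continuous.intervalIntegrable (by fun_prop) 0 1),
    intervalIntegral.integral_add (by exact Continuous.intervalIntegrable (by fun_prop) 0 1)
      (Continuous.intervalIntegrable (by fun_prop) 0 1)]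
  rw [intervalIntegral.integral_const_mul, int_sum_cos N (fun k => cc D κ k * Real.sqrt 2),
    int_sum_sq_cos N (fun k => cc D κ k * Real.sqrt 2)]
  simp only [intervalIntegral.integral_const, smul_eq_mul, sub_zero, one_mul, mul_zero, add_zero]
  congr 1
  apply Finset.sum_congr rfl
  intro k _
  have h2 : (Real.sqrt 2) ^ 2 = 2 := Real.sq_sqrt (by norm_num)
  rw [mul_pow, h2]; ring

lemma cos_lb (N k : ℕ) (hk1 : 1 ≤ k) (hkN : k ≤ N) (t : ℝ) (ht0 : 0 ≤ t)
    (ht : t ≤ 1 / (8 * N)) : 1 ≤ Real.sqrt 2 * Real.cos (2 * π * (k:ℝ) * t) := by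
  have hN0 : (0:ℝ) < N := Nat.cast_pos.mpr (by omega)
  have hθ0 : 0 ≤ 2 * π * (k:ℝ) * t := by positivity
  have hθ1 : 2 * π * (k:ℝ) * t ≤ π / 4 := by
    have hkN' : (k:ℝ) ≤ N := by exact_mod_cast hkN
    have h1 : 2 * π * (k:ℝ) * t ≤ 2 * π * (N:ℝ) * (1 / (8 * N)) := by
      apply mul_le_mul
      · apply mul_le_mul_of_nonneg_left hkN' (by positivity)
      · exact ht
      · exact ht0
      · positivity
    have h2 : 2 * π * (N:ℝ) * (1 / (8 * N)) = π / 4 := by field_simp; ring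
    linarith
  have hcos : Real.cos (π / 4) ≤ Real.cos (2 * π * (k:ℝ) * t) := by
    apply Real.cos_le_cos_of_nonneg_of_le_pi hθ0
    · linarith [Real.pi_pos]
    · exact hθ1
  rw [Real.cos_pi_div_four] at hcos
  have h2 : Real.sqrt 2 * (Real.sqrt 2 / 2) = 1 := by
    rw [mul_div_assoc', ← sq, Real.sq_sqrt (by norm_num : (0:ℝ) ≤ 2)]; norm_num
  calc (1:ℝ) = Real.sqrt 2 * (Real.sqrt 2 / 2) := h2.symm
    _ ≤ Real.sqrt 2 * Real.cos (2 * π * (k:ℝ) * t) :=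
        mul_le_mul_of_nonneg_left hcos (Real.sqrt_nonneg 2)

lemma cos_lb' (N k : ℕ) (hk1 : 1 ≤ k) (hkN : k ≤ N) (x : ℝ) (hx1 : 1 - 1 / (8 * N) ≤ x)
    (hx2 : x ≤ 1) : 1 ≤ Real.sqrt 2 * Real.cos (2 * π * (k:ℝ) * x) := by
  have key : Real.cos (2 * π * (k:ℝ) * x) = Real.cos (2 * π * (k:ℝ) * (1 - x)) := by
    have h := Real.cos_sub_int_mul_two_pi (2 * π * (k:ℝ) * x) (k:ℤ)
    rw [show 2 * π * (k:ℝ) * x - (k:ℤ) * (2 * π) = -(2 * π * (k:ℝ) * (1 - x)) by push_cast; ring]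
      at h
    rw [← h, Real.cos_neg]
  rw [key]
  exact cos_lb N k hk1 hkN (1 - x) (by linarith) (by linarith)

lemma cc_nonneg (D κ : ℝ) (hD : 0 < D) (hκ : 0 < κ) (k : ℕ) : 0 ≤ cc D κ k := by
  unfold cc
  apply div_nonneg (by positivity) (mu_pos D hD k).le

lemma ph_lb (D κ : ℝ) (hD : 0 < D) (hκ : 0 < κ) (N : ℕ) (x : ℝ)
    (h : ∀ k ∈ Finset.Icc 1 N, 1 ≤ Real.sqrt 2 * Real.cos (2 * π * (k:ℝ) * x)) :
    κ + ∑ k ∈ Finset.Icc 1 N, cc D κ k ≤ ph D κ N x := by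
  unfold ph
  gcongr κ + ?_
  apply Finset.sum_le_sum
  intro k hk
  calc cc D κ k = cc D κ k * 1 := (mul_one _).symm
    _ ≤ cc D κ k * (Real.sqrt 2 * Real.cos (2 * π * (k:ℝ) * x)) :=
        mul_le_mul_of_nonneg_left (h k hk) (cc_nonneg D κ hD hκ k)

lemma ph_cont (D κ : ℝ) (N : ℕ) : Continuous (ph D κ N) := by
  unfold ph; fun_prop

lemma int_exp_lb (D κ : ℝ) (hD : 0 < D) (hκ : 0 < κ) (N : ℕ) (hN : 1 ≤ N) :
    Real.exp (κ + ∑ k ∈ Finset.Icc 1 N, cc D κ k) / (4 * N)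
      ≤ ∫ x in (0:ℝ)..1, Real.exp (ph D κ N x) := by
  have hN0 : (0:ℝ) < N := Nat.cast_pos.mpr (by omega)
  have hN1 : (1:ℝ) ≤ N := by exact_mod_cast hN
  set l : ℝ := 1 / (8 * N) with hl
  have hl0 : 0 < l := by positivity
  have hl8 : l ≤ 1 / 8 := by
    rw [hl]
    apply div_le_div_of_nonneg_left (by norm_num) (by norm_num)
    linarith
  have hll : l ≤ 1 - l := by linarith
  set E : ℝ := Real.exp (κ + ∑ k ∈ Finset.Icc 1 N, cc D κ k) with hE
  have hii : ∀ a b : ℝ, IntervalIntegrable (fun x => Real.exp (ph D κ N x)) volume a b :=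
    fun a b => (Real.continuous_exp.comp (ph_cont D κ N)).intervalIntegrable a b
  have split : (∫ x in (0:ℝ)..1, Real.exp (ph D κ N x))
      = (∫ x in (0:ℝ)..l, Real.exp (ph D κ N x))
        + (∫ x in l..(1-l), Real.exp (ph D κ N x))
        + (∫ x in (1-l)..1, Real.exp (ph D κ N x)) := by
    rw [intervalIntegral.integral_add_adjacent_intervals (hii 0 l) (hii l (1-l)),
      intervalIntegral.integral_add_adjacent_intervals (hii 0 (1-l)) (hii (1-l) 1)]
  have b1 : l * E ≤ ∫ x in (0:ℝ)..l, Real.exp (ph D κ N x) := by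
    have h := intervalIntegral.integral_mono_on hl0.le
      (_root_.intervalIntegrable_const (c := E)) (hii 0 l) (fun x hx => by
        rw [hE]
        apply Real.exp_le_exp.mpr
        apply ph_lb D κ hD hκ N x
        intro k hk
        exact cos_lb N k (Finset.mem_Icc.mp hk).1 (Finset.mem_Icc.mp hk).2 x hx.1 hx.2)
    rwa [intervalIntegral.integral_const, smul_eq_mul, sub_zero] at h
  have b3 : l * E ≤ ∫ x in (1-l)..1, Real.exp (ph D κ N x) := by
    have h := intervalIntegral.integral_mono_on (by linarith : 1 - l ≤ 1)
      (_root_.intervalIntegrable_const (c := E)) (hii (1-l) 1) (fun x hx => by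
        rw [hE]
        apply Real.exp_le_exp.mpr
        apply ph_lb D κ hD hκ N x
        intro k hk
        exact cos_lb' N k (Finset.mem_Icc.mp hk).1 (Finset.mem_Icc.mp hk).2 x hx.1 hx.2)
    rwa [intervalIntegral.integral_const, smul_eq_mul, show (1:ℝ) - (1-l) = l by ring] at h
  have b2 : 0 ≤ ∫ x in l..(1-l), Real.exp (ph D κ N x) :=
    intervalIntegral.integral_nonneg hll (fun x _ => (Real.exp_pos _).le)
  have : E / (4*N) = l * E + l * E := by rw [hl]; field_simp; ring
  rw [this, split]
  linarith

lemma quad_sum (D κ : ℝ) (hD : 0 < D) (N : ℕ) :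
    D / 2 * (∑ k ∈ Finset.Icc 1 N, (cc D κ k) ^ 2 * (4 * π ^ 2 * (k:ℝ) ^ 2))
      + 1 / 2 * (κ ^ 2 + ∑ k ∈ Finset.Icc 1 N, (cc D κ k) ^ 2)
    = κ ^ 2 / 2 + κ ^ 2 * ∑ k ∈ Finset.Icc 1 N, 1 / (1 + D * (4 * π ^ 2 * (k:ℝ) ^ 2)) := by
  have hterm : ∀ k ∈ Finset.Icc 1 N,
      D / 2 * ((cc D κ k) ^ 2 * (4 * π ^ 2 * (k:ℝ) ^ 2)) + 1 / 2 * (cc D κ k) ^ 2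
        = κ ^ 2 * (1 / (1 + D * (4 * π ^ 2 * (k:ℝ) ^ 2))) := by
    intro k _
    have hm := mu_pos D hD k
    have hcc : (cc D κ k) ^ 2 = 2 * κ ^ 2 / (1 + D * (4 * π ^ 2 * (k:ℝ) ^ 2)) ^ 2 := by
      unfold cc
      rw [div_pow, mul_pow, Real.sq_sqrt (by norm_num : (0:ℝ) ≤ 2)]
    rw [hcc]
    field_simp
    ring
  calc D / 2 * (∑ k ∈ Finset.Icc 1 N, (cc D κ k) ^ 2 * (4 * π ^ 2 * (k:ℝ) ^ 2))
      + 1 / 2 * (κ ^ 2 + ∑ k ∈ Finset.Icc 1 N, (cc D κ k) ^ 2)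
      = κ ^ 2 / 2 + ((∑ k ∈ Finset.Icc 1 N, D / 2 * ((cc D κ k) ^ 2 * (4 * π ^ 2 * (k:ℝ) ^ 2)))
          + ∑ k ∈ Finset.Icc 1 N, 1 / 2 * (cc D κ k) ^ 2) := by
        rw [← Finset.mul_sum, ← Finset.mul_sum]; ring
    _ = κ ^ 2 / 2 + ∑ k ∈ Finset.Icc 1 N,
          (D / 2 * ((cc D κ k) ^ 2 * (4 * π ^ 2 * (k:ℝ) ^ 2)) + 1 / 2 * (cc D κ k) ^ 2) := by
        rw [← Finset.sum_add_distrib]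
    _ = κ ^ 2 / 2 + ∑ k ∈ Finset.Icc 1 N, κ ^ 2 * (1 / (1 + D * (4 * π ^ 2 * (k:ℝ) ^ 2))) := by
        rw [Finset.sum_congr rfl hterm]
    _ = _ := by rw [← Finset.mul_sum]

/-- Explicit upper bound for the trial function
`φ_N(x) = κ + Σ_{k=1}^N (√2κ/(1+Dμ_k))·√2 cos(2πkx)` with `μ_k = 4π²k²`:
`J(φ_N) ≤ −κ²/2 − κ²(√2−1)N/(1+Dμ_N) + κ log(4N)`. -/
theorem stmt7 (D κ : ℝ) (hD : 0 < D) (hκ : 0 < κ) (N : ℕ) (hN : 1 ≤ N) :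
    J D κ (fun x => κ + ∑ k ∈ Finset.Icc 1 N,
        (Real.sqrt 2 * κ / (1 + D * (4 * π ^ 2 * (k : ℝ) ^ 2))) *
          (Real.sqrt 2 * Real.cos (2 * π * (k : ℝ) * x)))
      ≤ -κ ^ 2 / 2 - κ ^ 2 * (Real.sqrt 2 - 1) * (N : ℝ) / (1 + D * (4 * π ^ 2 * (N : ℝ) ^ 2))
        + κ * Real.log (4 * (N : ℝ)) := by
  have hϕ : (fun x => κ + ∑ k ∈ Finset.Icc 1 N,
      (Real.sqrt 2 * κ / (1 + D * (4 * π ^ 2 * (k : ℝ) ^ 2))) *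
        (Real.sqrt 2 * Real.cos (2 * π * (k : ℝ) * x))) = ph D κ N := rfl
  rw [hϕ]
  unfold J
  rw [int_deriv_sq, int_ph_sq]
  have hN0 : (0:ℝ) < N := Nat.cast_pos.mpr (by omega)
  have hsqrt2 : (Real.sqrt 2) ^ 2 = 2 := Real.sq_sqrt (by norm_num)
  have h12 : (1:ℝ) ≤ Real.sqrt 2 := by nlinarith [Real.sqrt_nonneg 2]
  set S1 : ℝ := ∑ k ∈ Finset.Icc 1 N, 1 / (1 + D * (4 * π ^ 2 * (k:ℝ) ^ 2)) with hS1
  set T : ℝ := ∑ k ∈ Finset.Icc 1 N, cc D κ k with hT'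
  -- quadratic part
  have keyQ := quad_sum D κ hD N
  -- κ * T = √2 κ² S1
  have hT : κ * T = Real.sqrt 2 * κ ^ 2 * S1 := by
    rw [hT', hS1, Finset.mul_sum, Finset.mul_sum]
    apply Finset.sum_congr rfl
    intro k _
    unfold cc
    ring
  -- log bound
  have hexp := int_exp_lb D κ hD hκ N hN
  have hIpos : (0:ℝ) < ∫ x in (0:ℝ)..1, Real.exp (ph D κ N x) :=
    lt_of_lt_of_le (by positivity) hexp
  have hlog : κ + T - Real.log (4 * N) ≤ Real.log (∫ x in (0:ℝ)..1, Real.exp (ph D κ N x)) := by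
    have h1 : Real.log (Real.exp (κ + T) / (4 * N))
        ≤ Real.log (∫ x in (0:ℝ)..1, Real.exp (ph D κ N x)) := by
      exact Real.log_le_log (by positivity) hexp
    rwa [Real.log_div (Real.exp_ne_zero _) (by positivity), Real.log_exp] at h1
  have hklog : κ * (κ + T - Real.log (4 * N))
      ≤ κ * Real.log (∫ x in (0:ℝ)..1, Real.exp (ph D κ N x)) :=
    mul_le_mul_of_nonneg_left hlog hκ.le
  -- sum lower bound
  have hS1N : (N:ℝ) * (1 / (1 + D * (4 * π ^ 2 * (N:ℝ) ^ 2))) ≤ S1 := by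
    have hcard : (Finset.Icc 1 N).card = N := by rw [Nat.card_Icc]; omega
    have h := Finset.card_nsmul_le_sum (Finset.Icc 1 N)
      (fun k => 1 / (1 + D * (4 * π ^ 2 * (k:ℝ) ^ 2)))
      (1 / (1 + D * (4 * π ^ 2 * (N:ℝ) ^ 2))) (fun k hk => by
        apply one_div_le_one_div_of_le (mu_pos D hD k)
        have hkN : (k:ℝ) ≤ N := Nat.cast_le.mpr (Finset.mem_Icc.mp hk).2
        have hk0 : (0:ℝ) ≤ k := Nat.cast_nonneg k
        have h2 : (k:ℝ) ^ 2 ≤ (N:ℝ) ^ 2 := by nlinarith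
        have h3 : D * (4 * π ^ 2 * (k:ℝ) ^ 2) ≤ D * (4 * π ^ 2 * (N:ℝ) ^ 2) :=
          mul_le_mul_of_nonneg_left (mul_le_mul_of_nonneg_left h2 (by positivity)) hD.le
        linarith)
    rwa [hcard, nsmul_eq_mul] at h
  have hmul : (Real.sqrt 2 - 1) * κ ^ 2 * ((N:ℝ) * (1 / (1 + D * (4 * π ^ 2 * (N:ℝ) ^ 2))))
      ≤ (Real.sqrt 2 - 1) * κ ^ 2 * S1 :=
    mul_le_mul_of_nonneg_left hS1N (by nlinarith)
  have hgoal : κ ^ 2 * (Real.sqrt 2 - 1) * (N:ℝ) / (1 + D * (4 * π ^ 2 * (N:ℝ) ^ 2))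
      = (Real.sqrt 2 - 1) * κ ^ 2 * ((N:ℝ) * (1 / (1 + D * (4 * π ^ 2 * (N:ℝ) ^ 2)))) := by
    ring
  rw [hgoal]
  nlinarith [hklog, keyQ, hT, hmul]
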